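/- Let d = (d_1, ..., d_n) be a non-increasing sequence of positive integers whose sum is even and at most 2n - 2, and let k ∈ [n]. Then there exists a forest F with vertex set {u_1, ..., u_n} such that u_i has degree d_i for all i and {u_{k+1}, ..., u_n} is an independent set, if and only if Σ_{i=1}^k d_i ≥ Σ_{i=k+1}^n d_i. -/

import Mathlib

open Finset

/-- The degree of a vertex in a simple graph. -/
noncomputable def deg {V : Type*} (G : SimpleGraph V) (v : V) : ℕ := Nat.card {u // G.Adj v u}

/-- `D` is a dominating set of `G`. -/
def DomSet {V : Type*} (G : SimpleGraph V) (D : Set V) : Prop := ∀ v ∉ D, ∃ u ∈ D, G.Adj u v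

/-- `S` is an independent set of `G`. -/
def IndepSet {V : Type*} (G : SimpleGraph V) (S : Set V) : Prop :=
  ∀ u ∈ S, ∀ v ∈ S, ¬ G.Adj u v

/-- The domination number of `G`. -/
noncomputable def domNum {V : Type*} [Fintype V] (G : SimpleGraph V) : ℕ :=
  sInf {k | ∃ D : Finset V, D.card = k ∧ DomSet G ↑D}

/-- The independence number of `G`. -/
noncomputable def indepNum {V : Type*} [Fintype V] (G : SimpleGraph V) : ℕ :=
  sSup {k | ∃ S : Finset V, S.card = k ∧ IndepSet G ↑S}

/-- Sum of the first `k` entries `d_1 + ... + d_k` (0-indexed: indices `< k`). -/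
def psum {n : ℕ} (d : Fin n → ℕ) (k : ℕ) : ℕ := ∑ i : Fin n, if (i : ℕ) < k then d i else 0

/-- Sum of the remaining entries `d_{k+1} + ... + d_n` (0-indexed: indices `≥ k`). -/
def ssum {n : ℕ} (d : Fin n → ℕ) (k : ℕ) : ℕ := ∑ i : Fin n, if k ≤ (i : ℕ) then d i else 0

/-- Slater's bound `sl(d) = min{k ∈ [n] : d_1 + ... + d_k ≥ n - k}`. -/
noncomputable def slater (n : ℕ) (d : Fin n → ℕ) : ℕ := sInf {k | 1 ≤ k ∧ k ≤ n ∧ n - k ≤ psum d k}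

/-- The annihilation number `a(d) = n - min{k ∈ [n] : Σ_{i≤k} d_i ≥ Σ_{i>k} d_i}`. -/
noncomputable def annih (n : ℕ) (d : Fin n → ℕ) : ℕ := n - sInf {k | 1 ≤ k ∧ k ≤ n ∧ ssum d k ≤ psum d k}

/-- The number of entries of `d` equal to `j`. -/
def nCount {n : ℕ} (d : Fin n → ℕ) (j : ℕ) : ℕ := (Finset.univ.filter fun i => d i = j).card

/-- The number of entries of `d` that are at least `2`. -/
def nGe2 {n : ℕ} (d : Fin n → ℕ) : ℕ := (Finset.univ.filter fun i => 2 ≤ d i).card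

/-- `F` is a forest realization of the degree sequence `d`. -/
def IsForestReal {n : ℕ} (d : Fin n → ℕ) (F : SimpleGraph (Fin n)) : Prop :=
  F.IsAcyclic ∧ ∀ i, deg F i = d i

/-- The minimum domination number over all forest realizations of `d`. -/
noncomputable def gammaFmin {n : ℕ} (d : Fin n → ℕ) : ℕ :=
  sInf {m | ∃ F : SimpleGraph (Fin n), IsForestReal d F ∧ domNum F = m}

/-- The maximum independence number over all forest realizations of `d`. -/
noncomputable def alphaFmax {n : ℕ} (d : Fin n → ℕ) : ℕ :=
  sSup {m | ∃ F : SimpleGraph (Fin n), IsForestReal d F ∧ indepNum F = m}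

lemma deg_eq_ncard {V : Type*} (G : SimpleGraph V) (v : V) :
    deg G v = (G.neighborSet v).ncard := by
  rw [deg, ← Nat.card_coe_set_eq]
  rfl

lemma deg_eq_card {n : ℕ} (G : SimpleGraph (Fin n)) [DecidableRel G.Adj] (v : Fin n) :
    deg G v = (univ.filter (fun u => G.Adj v u)).card := by
  rw [deg, Nat.card_eq_fintype_card, Fintype.card_subtype]

lemma aux_core {V : Type*} {G : SimpleGraph V} (f : V → ℕ)
    (finj : Function.Injective f)
    (h1 : ∀ v u w, G.Adj v u → G.Adj v w → f u < f v → f w < f v → u = w)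
    {v : V} (c : G.Walk v v) (hc : c.IsCycle)
    (i j : ℕ) (hi : i < c.darts.length) (hj : j < c.darts.length) (hij : i ≠ j)
    (hchain : (c.darts[i]'hi).snd = (c.darts[j]'hj).fst)
    (hu_max : ∀ z ∈ c.support, f z ≤ f (c.darts[i]'hi).snd) : False := by
  set u := (c.darts[i]'hi).snd with hu_def
  set a := (c.darts[i]'hi).fst with ha_def
  set b := (c.darts[j]'hj).snd with hb_def
  have hadj_au : G.Adj a u := (c.darts[i]'hi).adj
  have hadj_ub : G.Adj u b := hchain ▸ (c.darts[j]'hj).adj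
  have ha_supp : a ∈ c.support :=
    c.dart_fst_mem_support_of_mem_darts (List.getElem_mem hi)
  have hb_supp : b ∈ c.support :=
    c.dart_snd_mem_support_of_mem_darts (List.getElem_mem hj)
  have hfa : f a < f u :=
    lt_of_le_of_ne (hu_max a ha_supp) (fun h => hadj_au.ne (finj h))
  have hfb : f b < f u :=
    lt_of_le_of_ne (hu_max b hb_supp) (fun h => hadj_ub.ne' (finj h))
  have hab : b = a := h1 u b a hadj_ub hadj_au.symm hfb hfa
  have hedge : (c.darts[i]'hi).edge = (c.darts[j]'hj).edge := by
    rw [SimpleGraph.Dart.edge, SimpleGraph.Dart.edge]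
    have h2 : (c.darts[j]'hj).toProd = (u, a) := by
      ext
      · exact hchain.symm
      · exact hab
    have h3 : (c.darts[i]'hi).toProd = (a, u) := by ext <;> rfl
    rw [h2, h3]
    exact Sym2.eq_swap
  have hE : c.edges = c.darts.map SimpleGraph.Dart.edge := rfl
  have hnodup : c.edges.Nodup := hc.edges_nodup
  rw [hE] at hnodup
  have hlen : ∀ t, t < c.darts.length → t < (c.darts.map SimpleGraph.Dart.edge).length := by
    simp
  have : (c.darts.map SimpleGraph.Dart.edge)[i]'(hlen i hi)
      = (c.darts.map SimpleGraph.Dart.edge)[j]'(hlen j hj) := by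
    simpa using hedge
  exact hij (hnodup.getElem_inj_iff.mp this)

lemma acyclic_of_rank {V : Type*} {G : SimpleGraph V} (f : V → ℕ)
    (finj : Function.Injective f)
    (h1 : ∀ v u w, G.Adj v u → G.Adj v w → f u < f v → f w < f v → u = w) :
    G.IsAcyclic := by
  intro v c hc
  have hlen3 : 3 ≤ c.length := hc.three_le_length
  have hDlen : c.darts.length = c.length := c.length_darts
  have hDne : c.darts ≠ [] := by
    intro h; rw [h] at hDlen; simp at hDlen; omega
  have hsupne : c.support ≠ [] := c.support_ne_nil
  obtain ⟨u, hu⟩ : ∃ u, u ∈ c.support.argmax f := by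
    cases h : c.support.argmax f with
    | none => exact absurd (List.argmax_eq_none.mp h) hsupne
    | some u => exact ⟨u, rfl⟩
  have hu_mem : u ∈ c.support := List.argmax_mem hu
  have hu_max : ∀ z ∈ c.support, f z ≤ f u := fun z hz => List.le_of_mem_argmax hz hu
  have hv_tail : v ∈ c.support.tail := by
    rw [← c.map_snd_darts]
    exact List.mem_map.mpr ⟨c.darts.getLast hDne, List.getLast_mem hDne, by rw [c.getLast_darts_eq_lastDart hDne]; simp [SimpleGraph.Walk.lastDart_toProd]⟩
  have hu_tail : u ∈ c.support.tail := by
    rcases (by rw [c.support_eq_cons] at hu_mem; exact List.mem_cons.mp hu_mem : u = v ∨ u ∈ c.support.tail) with h | h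
    · exact h ▸ hv_tail
    · exact h
  rw [← c.map_snd_darts] at hu_tail
  obtain ⟨i, hi, hdmu⟩ := List.mem_iff_getElem.mp hu_tail
  rw [List.getElem_map] at hdmu
  have hi' : i < c.darts.length := by simpa using hi
  have hmax' : ∀ z ∈ c.support, f z ≤ f ((c.darts[i]'hi').snd) := by
    intro z hz
    rw [show (c.darts[i]'hi').snd = u from hdmu]
    exact hu_max z hz
  have hN3 : 3 ≤ c.darts.length := by omega
  by_cases hjlt : i + 1 < c.darts.length
  case pos =>
    have hchain := List.isChain_iff_getElem.mp c.isChain_dartAdj_darts i (by omega)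
    exact aux_core f finj h1 c hc i (i+1) hi' hjlt (by omega) hchain hmax'
  case neg =>
    have hilast : i = c.darts.length - 1 := by omega
    subst hilast
    have hipos : 0 < c.darts.length := by omega
    have h1' : (c.darts[c.darts.length - 1]'hi').snd = v := by
      have h : (c.darts.getLast hDne).snd = v := by
        rw [c.getLast_darts_eq_lastDart hDne]; simp [SimpleGraph.Walk.lastDart_toProd]
      rwa [List.getLast_eq_getElem] at h
    have h2' : (c.darts[0]'hipos).fst = v := by
      have : (c.darts.head hDne).fst = v := by
        rw [c.head_darts_eq_firstDart hDne]; simp [SimpleGraph.Walk.firstDart_toProd]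
      rwa [List.head_eq_getElem_zero] at this
    exact aux_core f finj h1 c hc (c.darts.length - 1) 0 hi' hipos (by omega) (h1'.trans h2'.symm) hmax'

def Real' (n k : ℕ) (d : Fin n → ℕ) : Prop :=
  ∃ (F : SimpleGraph (Fin n)) (f : Fin n → ℕ), Function.Injective f ∧
    (∀ v u w, F.Adj v u → F.Adj v w → f u < f v → f w < f v → u = w) ∧
    (∀ i, deg F i = d i) ∧ IndepSet F {i | k ≤ (i : ℕ)}

lemma matching_real {n k : ℕ} (heven : Even n) (h2k : n ≤ 2*k) (d : Fin n → ℕ)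
    (hone : ∀ i, d i = 1) : Real' n k d := by
  obtain ⟨c, hc⟩ := heven
  set M : SimpleGraph (Fin n) := SimpleGraph.fromRel (fun a b => b = a.rev) with hM
  have hrevne : ∀ a : Fin n, a.rev ≠ a := by
    intro a h
    have := congrArg Fin.val h
    rw [Fin.val_rev] at this
    have := a.isLt
    omega
  have hadj : ∀ a b, M.Adj a b ↔ b = a.rev := by
    intro a b
    rw [hM, SimpleGraph.fromRel_adj]
    constructor
    · rintro ⟨hne, h | h⟩
      · exact h
      · rw [h, Fin.rev_rev]
    · intro h
      subst h
      exact ⟨(hrevne a).symm, Or.inl rfl⟩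
  have hN : ∀ a, M.neighborSet a = {a.rev} := by
    intro a
    ext b
    simp only [SimpleGraph.mem_neighborSet, Set.mem_singleton_iff]
    exact hadj a b
  refine ⟨M, Fin.val, Fin.val_injective, ?_, ?_, ?_⟩
  · intro v u w hu hw _ _
    rw [hadj] at hu hw
    rw [hu, hw]
  · intro i
    rw [deg_eq_ncard, hN, Set.ncard_singleton, hone]
  · intro a ha b hb hab
    rw [hadj] at hab
    have hb' := congrArg Fin.val hab
    rw [Fin.val_rev] at hb'
    simp only [Set.mem_setOf_eq] at ha hb
    have := a.isLt
    omega

lemma val_succAbove {m : ℕ} (x : Fin (m+1)) (t : Fin m) :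
    ((x.succAbove t : Fin (m+1)) : ℕ) = if (t : ℕ) < (x : ℕ) then (t : ℕ) else (t : ℕ) + 1 := by
  rw [Fin.succAbove]
  split_ifs with h1 h2 h2
  · rfl
  · exact absurd (by rwa [Fin.lt_def, Fin.coe_castSucc] at h1) h2
  · exact absurd (by rwa [Fin.lt_def, Fin.coe_castSucc]) h1
  · rfl

lemma sum_step {m : ℕ} (x y : Fin (m+1)) (yh : Fin m) (hy : x.succAbove yh = y)
    (d : Fin (m+1) → ℕ) (hdx : d x = 1) (hdy : 1 ≤ d y)
    (P : Fin (m+1) → Prop) [DecidablePred P] (P' : Fin m → Prop) [DecidablePred P']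
    (hP : ∀ t, P' t ↔ P (x.succAbove t)) :
    (∑ i, if P i then d i else 0)
      = (if P x then 1 else 0) +
        ((∑ t, if P' t then (if t = yh then d y - 1 else d (x.succAbove t)) else 0)
          + if P y then 1 else 0) := by
  rw [Fin.sum_univ_succAbove (fun i => if P i then d i else 0) x, hdx]
  congr 1
  have hpt : ∀ t : Fin m,
      (if P (x.succAbove t) then d (x.succAbove t) else 0)
      = (if P' t then (if t = yh then d y - 1 else d (x.succAbove t)) else 0)
        + (if t = yh ∧ P y then 1 else 0) := by
    intro t
    by_cases ht : t = yh
    · subst ht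
      rw [hy]
      have hPyh : P' t ↔ P y := by rw [hP t, hy]
      by_cases hPy : P y
      · have h1 : P' t := hPyh.mpr hPy
        rw [if_pos hPy, if_pos h1, if_pos rfl, if_pos (⟨rfl, hPy⟩ : t = t ∧ P y)]
        omega
      · have h1 : ¬ P' t := fun h => hPy (hPyh.mp h)
        simp [hPy, h1]
    · have hne : x.succAbove t ≠ y := fun h =>
        ht (Fin.succAbove_right_injective (h.trans hy.symm))
      by_cases hPt : P (x.succAbove t)
      · rw [if_pos hPt, if_pos ((hP t).mpr hPt), if_neg ht,
          if_neg (fun h : t = yh ∧ P y => ht h.1), Nat.add_zero]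
      · rw [if_neg hPt, if_neg (fun h => hPt ((hP t).mp h)),
          if_neg (fun h : t = yh ∧ P y => ht h.1), Nat.add_zero]
  rw [Finset.sum_congr rfl (fun t _ => hpt t), Finset.sum_add_distrib]
  congr 1
  have : ∀ t : Fin m, (if t = yh ∧ P y then 1 else 0)
      = if t = yh then (if P y then 1 else 0) else 0 := by
    intro t
    by_cases ht : t = yh <;> by_cases hPy : P y <;> simp [ht, hPy]
  rw [Finset.sum_congr rfl (fun t _ => this t), Finset.sum_ite_eq' Finset.univ yh]
  simp

lemma extend_step {m k k' : ℕ} (d : Fin (m+1) → ℕ)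
    (x : Fin (m+1)) (yh : Fin m)
    (hdx : d x = 1) (hdy : 2 ≤ d (x.succAbove yh))
    (hk' : ∀ t : Fin m, ((t : ℕ) < k' ↔ ((x.succAbove t : Fin (m+1)) : ℕ) < k))
    (hxy_not : ¬ (k ≤ (x : ℕ) ∧ k ≤ ((x.succAbove yh : Fin (m+1)) : ℕ)))
    (h : Real' m k' (fun t => if t = yh then d (x.succAbove yh) - 1 else d (x.succAbove t))) :
    Real' (m+1) k d := by
  classical
  obtain ⟨F', f', finj', ford', fdeg', find'⟩ := h
  set y := x.succAbove yh with hy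
  have hyx : y ≠ x := x.succAbove_ne yh
  have einj : Function.Injective (x.succAbove : Fin m → Fin (m+1)) :=
    Fin.succAbove_right_injective
  set F : SimpleGraph (Fin (m+1)) :=
    F'.map (x.succAboveEmb) ⊔ SimpleGraph.fromEdgeSet {s(x, y)} with hF
  have hxne : ∀ t, x.succAbove t ≠ x := fun t => x.succAbove_ne t
  have hFadj : ∀ a b, F.Adj a b ↔
      ((∃ s t, F'.Adj s t ∧ x.succAbove s = a ∧ x.succAbove t = b) ∨
        (a = x ∧ b = y) ∨ (a = y ∧ b = x)) := by
    intro a b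
    rw [hF, SimpleGraph.sup_adj, SimpleGraph.map_adj, SimpleGraph.fromEdgeSet_adj,
      Set.mem_singleton_iff]
    constructor
    · rintro (⟨s, t, h1, h2, h3⟩ | ⟨h1, _⟩)
      · exact Or.inl ⟨s, t, h1, h2, h3⟩
      · rcases Sym2.eq_iff.mp h1 with ⟨rfl, rfl⟩ | ⟨rfl, rfl⟩
        · exact Or.inr (Or.inl ⟨rfl, rfl⟩)
        · exact Or.inr (Or.inr ⟨rfl, rfl⟩)
    · rintro (⟨s, t, h1, h2, h3⟩ | ⟨rfl, rfl⟩ | ⟨rfl, rfl⟩)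
      · exact Or.inl ⟨s, t, h1, h2, h3⟩
      · exact Or.inr ⟨by rw [Sym2.eq_iff]; exact Or.inl ⟨rfl, rfl⟩, hyx.symm⟩
      · exact Or.inr ⟨by rw [Sym2.eq_iff]; exact Or.inr ⟨rfl, rfl⟩, hyx⟩
  have hNx : F.neighborSet x = {y} := by
    ext b
    simp only [SimpleGraph.mem_neighborSet, Set.mem_singleton_iff, hFadj]
    constructor
    · rintro (⟨s, t, _, h2, _⟩ | ⟨_, h2⟩ | ⟨h1, _⟩)
      · exact absurd h2 (hxne s)
      · exact h2
      · exact absurd h1.symm hyx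
    · rintro rfl
      exact Or.inr (Or.inl ⟨by trivial, by trivial⟩)
  have hNe : ∀ t : Fin m, t ≠ yh →
      F.neighborSet (x.succAbove t) = (x.succAbove) '' (F'.neighborSet t) := by
    intro t ht
    ext b
    simp only [SimpleGraph.mem_neighborSet, Set.mem_image, hFadj]
    constructor
    · rintro (⟨s, t', h1, h2, h3⟩ | ⟨h1, _⟩ | ⟨h1, h2⟩)
      · obtain rfl : s = t := einj h2
        exact ⟨t', h1, h3⟩
      · exact absurd h1 (hxne t)
      · exact absurd (einj (h1.trans hy)) ht
    · rintro ⟨t', h1, rfl⟩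
      exact Or.inl ⟨t, t', h1, rfl, rfl⟩
  have hNy : F.neighborSet y = insert x ((x.succAbove) '' (F'.neighborSet yh)) := by
    ext b
    simp only [SimpleGraph.mem_neighborSet, Set.mem_insert_iff, Set.mem_image, hFadj]
    constructor
    · rintro (⟨s, t', h1, h2, h3⟩ | ⟨h1, _⟩ | ⟨_, h2⟩)
      · obtain rfl : s = yh := einj (h2.trans hy)
        exact Or.inr ⟨t', h1, h3⟩
      · exact absurd h1 hyx
      · exact Or.inl h2
    · rintro (rfl | ⟨t', h1, rfl⟩)
      · exact Or.inr (Or.inr ⟨by trivial, by trivial⟩)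
      · exact Or.inl ⟨yh, t', h1, hy.symm, rfl⟩
  have hdeg : ∀ i, deg F i = d i := by
    intro i
    by_cases hix : i = x
    · subst hix
      rw [deg_eq_ncard, hNx, Set.ncard_singleton, hdx]
    · obtain ⟨t, rfl⟩ := Fin.exists_succAbove_eq hix
      by_cases ht : t = yh
      · subst ht
        rw [deg_eq_ncard, ← hy, hNy]
        have hxnotin : x ∉ (x.succAbove) '' (F'.neighborSet t) := by
          rintro ⟨t', _, h2⟩
          exact hxne t' h2
        rw [Set.ncard_insert_of_notMem hxnotin (Set.toFinite _),
          Set.ncard_image_of_injective _ einj]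
        have h2 : (F'.neighborSet t).ncard = d y - 1 := by
          have := fdeg' t
          rw [deg_eq_ncard] at this
          simpa [← hy] using this
        rw [h2]
        omega
      · rw [deg_eq_ncard, hNe t ht, Set.ncard_image_of_injective _ einj]
        have h2 : (F'.neighborSet t).ncard = d (x.succAbove t) := by
          have := fdeg' t
          rw [deg_eq_ncard] at this
          simpa [ht] using this
        rw [h2]
  set B : ℕ := (Finset.univ.sup f') + 1 with hB
  have hgex : ∀ v : Fin (m+1), v ≠ x → ∃ t, x.succAbove t = v :=
    fun v hv => Fin.exists_succAbove_eq hv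
  set f : Fin (m+1) → ℕ :=
    fun v => if hv : v = x then B else f' (hgex v hv).choose with hf
  have hfe : ∀ t, f (x.succAbove t) = f' t := by
    intro t
    rw [hf]
    simp only []
    rw [dif_neg (hxne t)]
    congr 1
    exact einj (hgex _ (hxne t)).choose_spec
  have hfx : f x = B := by rw [hf]; simp only []; rw [dif_pos trivial]
  have hflt : ∀ t, f' t < B := fun t =>
    Nat.lt_succ_of_le (Finset.le_sup (Finset.mem_univ t))
  have finj : Function.Injective f := by
    intro a b hab
    by_cases ha : a = x <;> by_cases hb : b = x
    · rw [ha, hb]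
    · obtain ⟨t, rfl⟩ := hgex b hb
      rw [ha, hfx, hfe] at hab
      exact absurd hab.symm (Nat.ne_of_lt (hflt t))
    · obtain ⟨t, rfl⟩ := hgex a ha
      rw [hb, hfx, hfe] at hab
      exact absurd hab (Nat.ne_of_lt (hflt t))
    · obtain ⟨s, rfl⟩ := hgex a ha
      obtain ⟨t, rfl⟩ := hgex b hb
      rw [hfe, hfe] at hab
      exact congrArg _ (finj' hab)
  have key : ∀ v u, F.Adj v u → f u < f v → (v = x ∧ u = y) ∨
      (∃ s t, F'.Adj s t ∧ x.succAbove s = v ∧ x.succAbove t = u ∧ f' t < f' s) := by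
    intro v u hadj hlt
    rcases (hFadj v u).mp hadj with ⟨s, t, h1, h2, h3⟩ | ⟨rfl, rfl⟩ | ⟨rfl, rfl⟩
    · exact Or.inr ⟨s, t, h1, h2, h3, by rwa [← h2, ← h3, hfe, hfe] at hlt⟩
    · exact Or.inl ⟨rfl, rfl⟩
    · exfalso
      rw [hfx, hy, hfe] at hlt
      exact absurd hlt (Nat.not_lt.mpr (le_of_lt (hflt yh)))
  have ford : ∀ v u w, F.Adj v u → F.Adj v w → f u < f v → f w < f v → u = w := by
    intro v u w h1 h2 l1 l2
    rcases key v u h1 l1 with ⟨hvx, huy⟩ | ⟨s, t, a1, a2, a3, a4⟩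
    · rcases key v w h2 l2 with ⟨_, hwy⟩ | ⟨s, t, b1, b2, b3, b4⟩
      · exact huy.trans hwy.symm
      · exact absurd (b2.trans hvx) (hxne s)
    · rcases key v w h2 l2 with ⟨hvx, hwy⟩ | ⟨s', t', b1, b2, b3, b4⟩
      · exact absurd (a2.trans hvx) (hxne s)
      · have hss : s' = s := einj (b2.trans a2.symm)
        rw [hss] at b1 b4
        have htt : t = t' := ford' s t t' a1 b1 a4 b4
        rw [← a3, ← b3, htt]
  have hind : IndepSet F {i : Fin (m+1) | k ≤ (i : ℕ)} := by
    intro a ha b hb hadj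
    rw [Set.mem_setOf_eq] at ha hb
    rcases (hFadj a b).mp hadj with ⟨s, t, h1, h2, h3⟩ | ⟨rfl, rfl⟩ | ⟨rfl, rfl⟩
    · subst h2
      subst h3
      have hs : k' ≤ (s : ℕ) := by
        by_contra hcon
        have := (hk' s).mp (by omega)
        omega
      have ht : k' ≤ (t : ℕ) := by
        by_contra hcon
        have := (hk' t).mp (by omega)
        omega
      exact find' s (Set.mem_setOf_eq ▸ hs) t (Set.mem_setOf_eq ▸ ht) h1
    · exact hxy_not ⟨ha, hb⟩
    · exact hxy_not ⟨hb, ha⟩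
  exact ⟨F, f, finj, ford, hdeg, hind⟩

lemma exists_xy {n k : ℕ} (d : Fin n → ℕ) (hk1 : 1 ≤ k) (hkn : k ≤ n)
    (hpos : ∀ i, 1 ≤ d i) (hsum : ∑ i, d i ≤ 2*n - 2)
    (i₀ : Fin n) (hi₀ : 2 ≤ d i₀) :
    ∃ x y : Fin n, x ≠ y ∧ d x = 1 ∧ 2 ≤ d y ∧
      ((k ≤ (x : ℕ) ∧ (y : ℕ) < k) ∨ ((x : ℕ) < k ∧ k ≤ (y : ℕ)) ∨
       ((x : ℕ) < k ∧ (y : ℕ) < k ∧ ssum d k + 2 ≤ psum d k)) := by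
  have hn1 : 1 ≤ n := le_trans hk1 hkn
  have hleaf : ∃ x : Fin n, d x = 1 := by
    by_contra hno
    push_neg at hno
    have h2 : ∀ i, 2 ≤ d i := fun i => by have h1 := hpos i; have h2 := hno i; omega
    have hge : 2*n ≤ ∑ i, d i := by
      calc 2*n = ∑ _i : Fin n, 2 := by
            rw [Finset.sum_const, Finset.card_univ, Fintype.card_fin, smul_eq_mul]
            ring
        _ ≤ ∑ i, d i := Finset.sum_le_sum (fun i _ => h2 i)
    omega
  by_cases hAbig : ∃ i : Fin n, (i : ℕ) < k ∧ 2 ≤ d i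
  · obtain ⟨i, hik, hi2⟩ := hAbig
    by_cases hBleaf : ∃ j : Fin n, k ≤ (j : ℕ) ∧ d j = 1
    · obtain ⟨j, hjk, hj1⟩ := hBleaf
      have hne : (j : ℕ) ≠ (i : ℕ) := by omega
      exact ⟨j, i, fun h => hne (congrArg Fin.val h), hj1, hi2, Or.inl ⟨hjk, hik⟩⟩
    · push_neg at hBleaf
      obtain ⟨x, hx1⟩ := hleaf
      have hxk : (x : ℕ) < k := by
        by_contra h
        exact hBleaf x (by omega) hx1
      by_cases hkn' : k < n
      · set j : Fin n := ⟨k, hkn'⟩ with hj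
        have hj2 : 2 ≤ d j := by
          have h1 := hpos j
          have h2 := hBleaf j (le_refl _)
          omega
        have hne : (x : ℕ) ≠ (j : ℕ) := by simp [hj]; omega
        exact ⟨x, j, fun h => hne (congrArg Fin.val h), hx1, hj2,
          Or.inr (Or.inl ⟨hxk, le_refl _⟩)⟩
      · have hkn2 : k = n := by omega
        have hssum0 : ssum d k = 0 := by
          apply Finset.sum_eq_zero
          intro i _
          rw [if_neg]
          have := i.isLt
          omega
        have hpsum : psum d k = ∑ i, d i := by
          apply Finset.sum_congr rfl
          intro i _
          rw [if_pos (by have := i.isLt; omega)]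
        have hge2 : 2 ≤ ∑ i, d i := le_trans hi₀
          (Finset.single_le_sum (fun i _ => Nat.zero_le _) (Finset.mem_univ i₀))
        have hi₀k : (i₀ : ℕ) < k := by have := i₀.isLt; omega
        have hxi₀ : x ≠ i₀ := by
          intro h
          rw [h] at hx1
          omega
        exact ⟨x, i₀, hxi₀, hx1, hi₀, Or.inr (Or.inr ⟨hxk, hi₀k, by omega⟩)⟩
  · push_neg at hAbig
    have h0 : (0 : ℕ) < n := by omega
    set a : Fin n := ⟨0, h0⟩ with ha
    have ha1 : d a = 1 := by
      have h1 := hpos a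
      have h2 := hAbig a (by simp [ha]; omega)
      omega
    have hi₀k : k ≤ (i₀ : ℕ) := by
      by_contra h
      have := hAbig i₀ (by omega)
      omega
    have hne : (a : ℕ) ≠ (i₀ : ℕ) := by simp [ha]; omega
    exact ⟨a, i₀, fun h => hne (congrArg Fin.val h), ha1, hi₀,
      Or.inr (Or.inl ⟨by simp [ha]; omega, hi₀k⟩)⟩

lemma construct : ∀ n k : ℕ, ∀ d : Fin n → ℕ, k ≤ n → (∀ i, 1 ≤ d i) →
    Even (∑ i, d i) → (∑ i, d i) ≤ 2*n - 2 → ssum d k ≤ psum d k → Real' n k d := by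
  intro n
  induction n using Nat.strong_induction_on with
  | _ n ih =>
  intro k d hkn hpos heven hsum hss
  cases n with
  | zero =>
    refine ⟨⊥, fun _ => 0, ?_, ?_, ?_, ?_⟩
    · intro a
      exact a.elim0
    · intro v
      exact v.elim0
    · intro i
      exact i.elim0
    · intro u hu
      exact u.elim0
  | succ m =>
    by_cases hk0 : k = 0
    · exfalso
      subst hk0
      have h1 : psum d 0 = 0 := Finset.sum_eq_zero (fun i _ => if_neg (by omega))
      have h2 : ssum d 0 = ∑ i, d i :=
        Finset.sum_congr rfl (fun i _ => if_pos (Nat.zero_le _))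
      have h3 : 1 ≤ ∑ i, d i := le_trans (hpos ⟨0, Nat.succ_pos m⟩)
        (Finset.single_le_sum (fun i _ => Nat.zero_le _) (Finset.mem_univ _))
      omega
    · have hk1 : 1 ≤ k := by omega
      by_cases hall1 : ∀ i, d i = 1
      · -- matching case
        have hsum1 : ∑ i, d i = m + 1 := by
          rw [Finset.sum_congr rfl (fun i _ => hall1 i), Finset.sum_const,
            Finset.card_univ, Fintype.card_fin, smul_eq_mul, mul_one]
        have heven' : Even (m+1) := hsum1 ▸ heven
        have hcnt : ∀ (c : ℕ), c ≤ m+1 →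
            (∑ i : Fin (m+1), if (i : ℕ) < c then (1:ℕ) else 0) = c := by
          intro c hc
          rw [Fin.sum_univ_eq_sum_range (fun j => if j < c then (1:ℕ) else 0) (m+1)]
          rw [← Finset.card_filter]
          have : (Finset.range (m+1)).filter (· < c) = Finset.range c := by
            ext j
            simp only [Finset.mem_filter, Finset.mem_range]
            omega
          rw [this, Finset.card_range]
        have hpsum : psum d k = k := by
          rw [psum, Finset.sum_congr rfl (fun i _ => by rw [hall1 i])]
          exact hcnt k hkn
        have hsplit : psum d k + ssum d k = ∑ i, d i := by
          rw [psum, ssum, ← Finset.sum_add_distrib]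
          apply Finset.sum_congr rfl
          intro i _
          by_cases h : (i : ℕ) < k
          · rw [if_pos h, if_neg (by omega)]
            omega
          · rw [if_neg h, if_pos (by omega)]
            omega
        exact matching_real heven' (by omega) d hall1
      · push_neg at hall1
        obtain ⟨i₀, hi₀⟩ := hall1
        have hi₀2 : 2 ≤ d i₀ := by have := hpos i₀; omega
        obtain ⟨x, y, hxy, hdx, hdy, hopt⟩ := exists_xy d hk1 hkn hpos hsum i₀ hi₀2
        obtain ⟨yh, hyh⟩ := Fin.exists_succAbove_eq (Ne.symm hxy)
        set k' := if (x : ℕ) < k then k - 1 else k with hk'def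
        have hk'iff : ∀ t : Fin m, ((t : ℕ) < k' ↔ ((x.succAbove t : Fin (m+1)) : ℕ) < k) := by
          intro t
          rw [hk'def, val_succAbove x t]
          have hxm := x.isLt
          have htm := t.isLt
          split_ifs with h1 h2 <;> omega
        have hk'iff' : ∀ t : Fin m, (k' ≤ (t : ℕ) ↔ k ≤ ((x.succAbove t : Fin (m+1)) : ℕ)) := by
          intro t
          rw [← Nat.not_lt, ← Nat.not_lt]
          exact not_congr (hk'iff t)
        have hdy1 : 1 ≤ d y := by omega
        have htot : (∑ i, d i) =
            1 + ((∑ t : Fin m, if t = yh then d y - 1 else d (x.succAbove t)) + 1) := by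
          have h := sum_step x y yh hyh d hdx hdy1 (fun _ => True) (fun _ => True)
            (fun t => Iff.rfl)
          simpa using h
        have hP : psum d k = (if (x : ℕ) < k then 1 else 0) +
            ((∑ t : Fin m, if (t : ℕ) < k' then
              (if t = yh then d y - 1 else d (x.succAbove t)) else 0)
              + if (y : ℕ) < k then 1 else 0) :=
          sum_step x y yh hyh d hdx hdy1 (fun i => (i : ℕ) < k) (fun t => (t : ℕ) < k')
            (fun t => hk'iff t)
        have hS : ssum d k = (if k ≤ (x : ℕ) then 1 else 0) +
            ((∑ t : Fin m, if k' ≤ (t : ℕ) then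
              (if t = yh then d y - 1 else d (x.succAbove t)) else 0)
              + if k ≤ (y : ℕ) then 1 else 0) :=
          sum_step x y yh hyh d hdx hdy1 (fun i => k ≤ (i : ℕ)) (fun t => k' ≤ (t : ℕ))
            (fun t => hk'iff' t)
        have hk'le : k' ≤ m := by
          rw [hk'def]
          have := x.isLt
          split_ifs with h <;> omega
        have hpos' : ∀ t : Fin m, 1 ≤ (if t = yh then d y - 1 else d (x.succAbove t)) := by
          intro t
          by_cases ht : t = yh
          · rw [if_pos ht]; omega
          · rw [if_neg ht]; exact hpos _
        have heven' : Even (∑ t : Fin m, if t = yh then d y - 1 else d (x.succAbove t)) := by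
          obtain ⟨c, hc⟩ := heven
          exact ⟨c - 1, by omega⟩
        have hsum' : (∑ t : Fin m, if t = yh then d y - 1 else d (x.succAbove t)) ≤ 2*m - 2 := by
          omega
        have hss' : ssum (fun t => if t = yh then d y - 1 else d (x.succAbove t)) k'
            ≤ psum (fun t => if t = yh then d y - 1 else d (x.succAbove t)) k' := by
          have e1 : psum (fun t => if t = yh then d y - 1 else d (x.succAbove t)) k'
              = ∑ t : Fin m, if (t : ℕ) < k' then
                (if t = yh then d y - 1 else d (x.succAbove t)) else 0 := rfl
          have e2 : ssum (fun t => if t = yh then d y - 1 else d (x.succAbove t)) k'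
              = ∑ t : Fin m, if k' ≤ (t : ℕ) then
                (if t = yh then d y - 1 else d (x.succAbove t)) else 0 := rfl
          rw [e1, e2]
          rcases hopt with ⟨h1, h2⟩ | ⟨h1, h2⟩ | ⟨h1, h2, h3⟩
          · rw [hP, hS, if_neg (by omega : ¬ (x : ℕ) < k), if_pos h2, if_pos h1,
              if_neg (by omega : ¬ k ≤ (y : ℕ))] at hss
            omega
          · rw [hP, hS, if_pos h1, if_neg (by omega : ¬ (y : ℕ) < k),
              if_neg (by omega : ¬ k ≤ (x : ℕ)), if_pos h2] at hss
            omega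
          · rw [hP, hS, if_pos h1, if_pos h2, if_neg (by omega : ¬ k ≤ (x : ℕ)),
              if_neg (by omega : ¬ k ≤ (y : ℕ))] at h3
            omega
        have hreal : Real' m k' (fun t => if t = yh then d y - 1 else d (x.succAbove t)) :=
          ih m (Nat.lt_succ_self m) k' _ hk'le hpos' heven' hsum' hss'
        have hnotBB : ¬ (k ≤ (x : ℕ) ∧ k ≤ ((x.succAbove yh : Fin (m+1)) : ℕ)) := by
          rw [hyh]
          rintro ⟨h1, h2⟩
          rcases hopt with ⟨a, b⟩ | ⟨a, b⟩ | ⟨a, b, c⟩ <;> omega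
        apply extend_step d x yh hdx (by rw [hyh]; omega) hk'iff hnotBB
        simpa [hyh] using hreal

theorem stmt3 {n : ℕ} (d : Fin n → ℕ) (hd : Antitone d) (hpos : ∀ i, 1 ≤ d i)
    (heven : Even (∑ i, d i)) (hsum : ∑ i, d i ≤ 2 * n - 2)
    (k : ℕ) (hk1 : 1 ≤ k) (hkn : k ≤ n) :
    (∃ F : SimpleGraph (Fin n), IsForestReal d F ∧ IndepSet F {i | k ≤ (i : ℕ)}) ↔
      ssum d k ≤ psum d k := by
  constructor
  · rintro ⟨F, ⟨hacyc, hdeg⟩, hind⟩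
    classical
    haveI : DecidableRel F.Adj := Classical.decRel _
    have hdegF : ∀ i, d i = (univ.filter (fun j => F.Adj i j)).card := by
      intro i
      rw [← hdeg i, deg_eq_card]
    set S1 := (univ ×ˢ univ).filter
      (fun p : Fin n × Fin n => k ≤ (p.1 : ℕ) ∧ F.Adj p.1 p.2) with hS1
    set S2 := (univ ×ˢ univ).filter
      (fun p : Fin n × Fin n => (p.1 : ℕ) < k ∧ F.Adj p.1 p.2) with hS2
    have h1 : S1.card = ssum d k := by
      rw [hS1, Finset.card_filter, Finset.sum_product, ssum]
      apply Finset.sum_congr rfl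
      intro i _
      by_cases h : k ≤ (i : ℕ)
      · rw [if_pos h, hdegF i, Finset.card_filter]
        apply Finset.sum_congr rfl
        intro j _
        by_cases hadj : F.Adj i j
        · rw [if_pos ⟨h, hadj⟩, if_pos hadj]
        · rw [if_neg (fun hc => hadj hc.2), if_neg hadj]
      · rw [if_neg h]
        apply Finset.sum_eq_zero
        intro j _
        rw [if_neg (fun hc => h hc.1)]
    have h2 : S2.card = psum d k := by
      rw [hS2, Finset.card_filter, Finset.sum_product, psum]
      apply Finset.sum_congr rfl
      intro i _
      by_cases h : (i : ℕ) < k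
      · rw [if_pos h, hdegF i, Finset.card_filter]
        apply Finset.sum_congr rfl
        intro j _
        by_cases hadj : F.Adj i j
        · rw [if_pos ⟨h, hadj⟩, if_pos hadj]
        · rw [if_neg (fun hc => hadj hc.2), if_neg hadj]
      · rw [if_neg h]
        apply Finset.sum_eq_zero
        intro j _
        rw [if_neg (fun hc => h hc.1)]
    have hle : S1.card ≤ S2.card := by
      apply Finset.card_le_card_of_injOn (fun p => (p.2, p.1))
      · intro p hp
        simp only [hS1, hS2, Finset.mem_coe, Finset.mem_filter, Finset.mem_product, Finset.mem_univ,
          true_and] at hp ⊢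
        obtain ⟨hk1p, hadj⟩ := hp
        refine ⟨?_, hadj.symm⟩
        by_contra hc
        push_neg at hc
        exact hind p.1 hk1p p.2 hc hadj
      · intro p _ q _ h
        rw [Prod.ext_iff] at h
        obtain ⟨h1, h2⟩ := h
        exact Prod.ext h2 h1
    omega
  · intro hss
    obtain ⟨F, f, finj, ford, hdeg, hind⟩ := construct n k d hkn hpos heven hsum hss
    exact ⟨F, ⟨acyclic_of_rank f finj ford, hdeg⟩, hind⟩
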